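/- Suppose fₙ ⇀ f weakly in L²(Ω) and gₙ = A(fₙ) ⇀ g weakly in L²(Ω), where A : ℝ → ℝ is continuous and monotone, and additionally limsupₙ ∫ fₙ gₙ ≤ ∫ f g. Then g = A(f) almost everywhere. -/

import Mathlib

open MeasureTheory Filter

/-- Minty's trick, scalar case: if fₙ ⇀ f and A(fₙ) ⇀ g weakly in L²(Ω), with A continuous,
nondecreasing and of linear growth, and limsup ∫ fₙ A(fₙ) ≤ ∫ f g, then g = A(f) a.e. -/
theorem stmt_16 {Ω : Type*} [MeasurableSpace Ω] (μ : Measure Ω) [IsFiniteMeasure μ]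
    (A : ℝ → ℝ) (hAcont : Continuous A) (hAmono : Monotone A)
    (hAgrowth : ∃ c : ℝ, ∀ z : ℝ, |A z| ≤ c * (1 + |z|))
    (fn : ℕ → Ω → ℝ) (f g : Ω → ℝ)
    (hfn : ∀ n, MemLp (fn n) 2 μ) (hf : MemLp f 2 μ) (hg : MemLp g 2 μ)
    (hweakf : ∀ φ : Ω → ℝ, MemLp φ 2 μ →
      Tendsto (fun n => ∫ ω, fn n ω * φ ω ∂μ) atTop (nhds (∫ ω, f ω * φ ω ∂μ)))
    (hweakg : ∀ φ : Ω → ℝ, MemLp φ 2 μ →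
      Tendsto (fun n => ∫ ω, A (fn n ω) * φ ω ∂μ) atTop (nhds (∫ ω, g ω * φ ω ∂μ)))
    (hlimsup : limsup (fun n => ∫ ω, fn n ω * A (fn n ω) ∂μ) atTop ≤ ∫ ω, f ω * g ω ∂μ) :
    g =ᵐ[μ] fun ω => A (f ω) := by
  obtain ⟨c, hc⟩ := hAgrowth
  -- A maps L² to L²
  have hA2 : ∀ {h : Ω → ℝ}, MemLp h 2 μ → MemLp (fun ω => A (h ω)) 2 μ := by
    intro h hh
    refine MemLp.of_le_mul (c := c) ((memLp_const (1:ℝ)).add hh.norm)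
      (hAcont.comp_aestronglyMeasurable hh.1) ?_
    filter_upwards with ω
    have h1 := hc (h ω)
    have h2 : (0:ℝ) ≤ 1 + |h ω| := by positivity
    have hc0 : 0 ≤ c := by
      have h0 := hc 0
      simp only [abs_zero, add_zero, mul_one] at h0
      linarith [abs_nonneg (A 0)]
    simp only [Real.norm_eq_abs, Pi.add_apply]
    calc |A (h ω)| ≤ c * (1 + |h ω|) := h1
      _ ≤ c * |(fun _ => (1:ℝ)) ω + ‖h ω‖| := by
          rw [Real.norm_eq_abs]
          exact mul_le_mul_of_nonneg_left (le_abs_self _) hc0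
  -- products of L² functions are integrable
  have hmul : ∀ {u v : Ω → ℝ}, MemLp u 2 μ → MemLp v 2 μ →
      Integrable (fun ω => u ω * v ω) μ := by
    intro u v hu hv
    have h := L2.integrable_inner (𝕜 := ℝ) (hu.toLp u) (hv.toLp v)
    refine h.congr ?_
    filter_upwards [hu.coeFn_toLp, hv.coeFn_toLp] with ω h1 h2
    simp [h1, h2, RCLike.inner_apply, mul_comm]
  have hc0 : 0 ≤ c := by
    have h0 := hc 0
    simp only [abs_zero, add_zero, mul_one] at h0
    linarith [abs_nonneg (A 0)]
  haveI : Fact ((1:ENNReal) ≤ 2) := ⟨one_le_two⟩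
  have hAfn : ∀ n, MemLp (fun ω => A (fn n ω)) 2 μ := fun n => hA2 (hfn n)
  -- uniform bounds on the L² norms via Banach–Steinhaus
  have hbdd : ∀ (u : ℕ → Ω → ℝ) (hu : ∀ n, MemLp (u n) 2 μ),
      (∀ φ : Ω → ℝ, MemLp φ 2 μ → ∃ l : ℝ,
        Tendsto (fun n => ∫ ω, u n ω * φ ω ∂μ) atTop (nhds l)) →
      ∃ C : ℝ, ∀ n, ‖(hu n).toLp (u n)‖ ≤ C := by
    intro u hu hconv
    have h := banach_steinhaus (g := fun n => innerSL ℝ ((hu n).toLp (u n))) ?_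
    · obtain ⟨C, hC⟩ := h
      exact ⟨C, fun n => by simpa only [innerSL_apply_norm] using hC n⟩
    · intro x
      obtain ⟨l, hl⟩ := hconv x (Lp.memLp x)
      obtain ⟨C, hC⟩ := hl.norm.bddAbove_range
      refine ⟨C, fun n => ?_⟩
      have heq : (innerSL ℝ ((hu n).toLp (u n))) x = ∫ ω, u n ω * x ω ∂μ := by
        simp only [innerSL_apply_apply, L2.inner_def]
        refine integral_congr_ae ?_
        filter_upwards [(hu n).coeFn_toLp] with ω h1
        simp [h1, RCLike.inner_apply, mul_comm]
      rw [heq]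
      exact hC (Set.mem_range_self n)
  obtain ⟨Cf, hCf⟩ := hbdd fn hfn (fun φ hφ => ⟨_, hweakf φ hφ⟩)
  obtain ⟨Cg, hCg⟩ := hbdd (fun n ω => A (fn n ω)) hAfn (fun φ hφ => ⟨_, hweakg φ hφ⟩)
  -- the sequence aₙ = ∫ fₙ A(fₙ) is bounded above
  have habdd : ∀ n, (∫ ω, fn n ω * A (fn n ω) ∂μ) ≤ Cf * Cg := by
    intro n
    have hinner : (∫ ω, fn n ω * A (fn n ω) ∂μ)
        = @inner ℝ _ _ ((hfn n).toLp (fn n)) ((hAfn n).toLp _) := by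
      rw [L2.inner_def]
      refine integral_congr_ae ?_
      filter_upwards [(hfn n).coeFn_toLp, (hAfn n).coeFn_toLp] with ω h1 h2
      simp [h1, h2, RCLike.inner_apply, mul_comm]
    rw [hinner]
    calc @inner ℝ _ _ ((hfn n).toLp (fn n)) ((hAfn n).toLp _)
        ≤ ‖(hfn n).toLp (fn n)‖ * ‖(hAfn n).toLp _‖ := real_inner_le_norm _ _
      _ ≤ Cf * Cg := by
          have := norm_nonneg ((hfn n).toLp (fn n))
          have := norm_nonneg ((hAfn n).toLp (fun ω => A (fn n ω)))
          exact mul_le_mul (hCf n) (hCg n) (by positivity) (le_trans (by positivity) (hCf n))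
  -- Key inequality: ∀ v ∈ L², ∫ (g - A v)(f - v) ≥ 0
  have key : ∀ v : Ω → ℝ, MemLp v 2 μ →
      0 ≤ ∫ ω, (g ω - A (v ω)) * (f ω - v ω) ∂μ := by
    intro v hv
    have hAv := hA2 hv
    set b : ℕ → ℝ := fun n => (∫ ω, A (fn n ω) * v ω ∂μ)
      + (∫ ω, fn n ω * A (v ω) ∂μ) - ∫ ω, A (v ω) * v ω ∂μ with hb
    have hba : ∀ n, b n ≤ ∫ ω, fn n ω * A (fn n ω) ∂μ := by
      intro n
      have hnn : 0 ≤ ∫ ω, (A (fn n ω) - A (v ω)) * (fn n ω - v ω) ∂μ := by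
        refine integral_nonneg fun ω => ?_
        show (0:ℝ) ≤ (A (fn n ω) - A (v ω)) * (fn n ω - v ω)
        rcases le_total (fn n ω) (v ω) with h | h
        · nlinarith [hAmono h]
        · nlinarith [hAmono h]
      have hexp : (∫ ω, (A (fn n ω) - A (v ω)) * (fn n ω - v ω) ∂μ)
          = (∫ ω, fn n ω * A (fn n ω) ∂μ) - (∫ ω, A (fn n ω) * v ω ∂μ)
            - ((∫ ω, fn n ω * A (v ω) ∂μ) - ∫ ω, A (v ω) * v ω ∂μ) := by
        rw [← integral_sub (hmul (hfn n) (hAv)) (hmul (hAv) hv),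
          ← integral_sub (hmul (hfn n) (hAfn n)) (hmul (hAfn n) hv),
          ← integral_sub]
        · exact integral_congr_ae (Eventually.of_forall fun ω => by ring)
        · exact (hmul (hfn n) (hAfn n)).sub (hmul (hAfn n) hv)
        · exact (hmul (hfn n) hAv).sub (hmul hAv hv)
      rw [hb]
      dsimp only
      linarith [hnn, hexp]
    have hbL : Tendsto b atTop (nhds ((∫ ω, g ω * v ω ∂μ)
        + (∫ ω, f ω * A (v ω) ∂μ) - ∫ ω, A (v ω) * v ω ∂μ)) :=
      ((hweakg v hv).add (hweakf _ hAv)).sub_const _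
    have hL : (∫ ω, g ω * v ω ∂μ) + (∫ ω, f ω * A (v ω) ∂μ) - (∫ ω, A (v ω) * v ω ∂μ)
        ≤ ∫ ω, f ω * g ω ∂μ := by
      have h1 : limsup b atTop = _ := hbL.limsup_eq
      have h2 : limsup b atTop ≤ limsup (fun n => ∫ ω, fn n ω * A (fn n ω) ∂μ) atTop :=
        limsup_le_limsup (Eventually.of_forall hba)
          (hbL.isBoundedUnder_ge.isCoboundedUnder_le)
          (isBoundedUnder_of ⟨Cf * Cg, habdd⟩)
      rw [h1] at h2
      exact h2.trans hlimsup
    have hexp2 : (∫ ω, (g ω - A (v ω)) * (f ω - v ω) ∂μ)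
        = (∫ ω, f ω * g ω ∂μ) - (∫ ω, g ω * v ω ∂μ)
          - ((∫ ω, f ω * A (v ω) ∂μ) - ∫ ω, A (v ω) * v ω ∂μ) := by
      rw [← integral_sub (hmul hf hAv) (hmul hAv hv),
        ← integral_sub (hmul hf hg) (hmul hg hv),
        ← integral_sub]
      · exact integral_congr_ae (Eventually.of_forall fun ω => by ring)
      · exact (hmul hf hg).sub (hmul hg hv)
      · exact (hmul hf hAv).sub (hmul hAv hv)
    rw [hexp2]
    linarith
  -- Step 3: for every w ∈ L², ∫ g w ≤ ∫ A(f) w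
  have hAf : MemLp (fun ω => A (f ω)) 2 μ := hA2 hf
  have key2 : ∀ w : Ω → ℝ, MemLp w 2 μ →
      (∫ ω, g ω * w ω ∂μ) ≤ ∫ ω, A (f ω) * w ω ∂μ := by
    intro w hw
    have hvk : ∀ k : ℕ, MemLp (fun ω => f ω + ((k:ℝ)+1)⁻¹ * w ω) 2 μ :=
      fun k => hf.add (hw.const_mul _)
    have htpos : ∀ k : ℕ, (0:ℝ) < ((k:ℝ)+1)⁻¹ := fun k => by positivity
    have hstep : ∀ k : ℕ, (∫ ω, g ω * w ω ∂μ)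
        ≤ ∫ ω, A (f ω + ((k:ℝ)+1)⁻¹ * w ω) * w ω ∂μ := by
      intro k
      set t : ℝ := ((k:ℝ)+1)⁻¹ with ht
      have h0 := key _ (hvk k)
      have hAvk := hA2 (hvk k)
      have hre : (∫ ω, (g ω - A (f ω + t * w ω)) * (f ω - (f ω + t * w ω)) ∂μ)
          = -t * ((∫ ω, g ω * w ω ∂μ) - ∫ ω, A (f ω + t * w ω) * w ω ∂μ) := by
        rw [← integral_sub (hmul hg hw) (hmul hAvk hw), ← integral_const_mul]
        exact integral_congr_ae (Eventually.of_forall fun ω => by ring)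
      rw [hre] at h0
      nlinarith [htpos k]
    have hlim : Tendsto (fun k : ℕ => ∫ ω, A (f ω + ((k:ℝ)+1)⁻¹ * w ω) * w ω ∂μ)
        atTop (nhds (∫ ω, A (f ω) * w ω ∂μ)) := by
      refine tendsto_integral_of_dominated_convergence
        (fun ω => (c * (1 + |f ω| + |w ω|)) * |w ω|)
        (fun k => ((hA2 (hvk k)).1.mul hw.1)) ?_ ?_ ?_
      · -- bound integrable
        have h1 : MemLp (fun ω => c * (1 + |f ω| + |w ω|)) 2 μ := by
          have : MemLp (fun ω => (1:ℝ) + |f ω| + |w ω|) 2 μ := by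
            exact ((memLp_const (1:ℝ)).add hf.norm).add hw.norm
          exact this.const_mul c
        exact hmul h1 hw.norm
      · -- uniform bound
        intro k
        filter_upwards with ω
        have h1 : |f ω + ((k:ℝ)+1)⁻¹ * w ω| ≤ |f ω| + |w ω| := by
          refine (abs_add_le _ _).trans ?_
          have h2 : |((k:ℝ)+1)⁻¹ * w ω| ≤ |w ω| := by
            rw [abs_mul]
            have : |((k:ℝ)+1)⁻¹| ≤ 1 := by
              rw [abs_of_pos (htpos k)]
              rw [inv_le_one_iff₀]
              right; linarith [Nat.cast_nonneg (α := ℝ) k]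
            nlinarith [abs_nonneg (w ω)]
          linarith
        have h3 := hc (f ω + ((k:ℝ)+1)⁻¹ * w ω)
        rw [norm_mul, Real.norm_eq_abs, Real.norm_eq_abs]
        refine mul_le_mul_of_nonneg_right ?_ (abs_nonneg _)
        calc |A (f ω + ((k:ℝ)+1)⁻¹ * w ω)| ≤ c * (1 + |f ω + ((k:ℝ)+1)⁻¹ * w ω|) := h3
          _ ≤ c * (1 + |f ω| + |w ω|) := by nlinarith
      · -- pointwise convergence
        filter_upwards with ω
        have ht0 : Tendsto (fun k : ℕ => ((k:ℝ)+1)⁻¹) atTop (nhds 0) :=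
          tendsto_one_div_add_atTop_nhds_zero_nat.congr (fun k => by rw [one_div])
        have harg : Tendsto (fun k : ℕ => f ω + ((k:ℝ)+1)⁻¹ * w ω) atTop (nhds (f ω)) := by
          have := (ht0.mul_const (w ω)).const_add (f ω)
          simpa using this
        exact ((hAcont.tendsto _).comp harg).mul_const (w ω)
    exact ge_of_tendsto' hlim hstep
  -- Conclusion: take w = g - A∘f
  set w0 : Ω → ℝ := fun ω => g ω - A (f ω) with hw0def
  have hw0 : MemLp w0 2 μ := hg.sub hAf
  have h1 := key2 w0 hw0
  have h2 := key2 (fun ω => -(w0 ω)) hw0.neg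
  have h2' : (∫ ω, A (f ω) * w0 ω ∂μ) ≤ ∫ ω, g ω * w0 ω ∂μ := by
    have e1 : (∫ ω, g ω * -(w0 ω) ∂μ) = -∫ ω, g ω * w0 ω ∂μ := by
      rw [← integral_neg]
      exact integral_congr_ae (Eventually.of_forall fun ω => by ring)
    have e2 : (∫ ω, A (f ω) * -(w0 ω) ∂μ) = -∫ ω, A (f ω) * w0 ω ∂μ := by
      rw [← integral_neg]
      exact integral_congr_ae (Eventually.of_forall fun ω => by ring)
    rw [e1, e2] at h2
    linarith
  have hzero : (∫ ω, w0 ω * w0 ω ∂μ) = 0 := by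
    have he : (∫ ω, w0 ω * w0 ω ∂μ)
        = (∫ ω, g ω * w0 ω ∂μ) - ∫ ω, A (f ω) * w0 ω ∂μ := by
      rw [← integral_sub (hmul hg hw0) (hmul hAf hw0)]
      exact integral_congr_ae (Eventually.of_forall fun ω => by simp [hw0def]; ring)
    rw [he]
    linarith
  have hae : (fun ω => w0 ω * w0 ω) =ᵐ[μ] 0 := by
    rw [← integral_eq_zero_iff_of_nonneg (fun ω => mul_self_nonneg _) (hmul hw0 hw0)] at *
    exact hzero
  filter_upwards [hae] with ω hω
  have hz : w0 ω = 0 := by simpa using hω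
  simpa [hw0def, sub_eq_zero] using hz
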